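/- arXiv:2412.04241 — 2 statements merged into one kernel-verified Lean document; each statement's English description precedes it below -/
import Mathlib

section
/- Let p be a prime and A a commutative ring that is p-torsion-free and p-adically complete (A ≅ lim_n A/p^nA). Let φ: A → A be a ring endomorphism of finite order (φ^s = id for some s ≥ 1) satisfying φ(a) ≡ a^p (mod pA) for all a ∈ A, and let ζ ∈ A satisfy φ(ζ) = ζ^p. Extend φ to A[1/p] and then coefficientwise to power series. Let f ∈ A[1/p][[x]] have constant term 1. Then f ∈ A[[x]] if and only if both: (i) the coefficient of x in f lies in A, and (ii) φ(f)((ζ+x)^p − ζ^p) / f(x)^p ∈ 1 + p·x·A[[x]], where φ(f)((ζ+x)^p − ζ^p) denotes the composition of the power series φ(f) with the polynomial (ζ+x)^p − ζ^p (which has zero constant term). -/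
/-!
STATEMENT 17 (Dwork's lemma): Let `p` be a prime, `A` a `p`-torsion-free and
`p`-adically complete commutative ring, `φ : A → A` a ring endomorphism of finite order
with `φ(a) ≡ a^p (mod p)` for all `a`, and `ζ ∈ A` with `φ(ζ) = ζ^p`.  Let `B = A[1/p]`
and `ψ : B → B` the extension of `φ`.  For `f ∈ B[[x]]` with constant term `1`:
`f ∈ A[[x]]` if and only if (i) the coefficient of `x` in `f` lies in `A`, and
(ii) `φ(f)((ζ+x)^p - ζ^p) / f(x)^p ∈ 1 + p·x·A[[x]]`.
-/

/-- Composition `f(g(x))` of a power series with a polynomial whose constant term is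
zero, defined coefficientwise (only `k ≤ n` contribute to the coefficient of `x^n`). -/
noncomputable def compPoly {B : Type*} [CommRing B] (f : PowerSeries B)
    (g : Polynomial B) : PowerSeries B :=
  PowerSeries.mk fun n => ∑ k ∈ Finset.range (n + 1),
    PowerSeries.coeff k f * (g ^ k).coeff n

namespace DworkAux

variable {B : Type*} [CommRing B]

lemma coeff_pow_eq_zero {g : Polynomial B} (hg : g.coeff 0 = 0) {k n : ℕ} (hn : n < k) :
    (g ^ k).coeff n = 0 := by
  obtain ⟨g', rfl⟩ := Polynomial.X_dvd_iff.2 hg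
  rw [mul_pow, Polynomial.coeff_mul]
  refine Finset.sum_eq_zero fun ab hab => ?_
  rw [Finset.HasAntidiagonal.mem_antidiagonal] at hab
  rw [Polynomial.coeff_X_pow, if_neg (by omega), zero_mul]

lemma comp_coeff {g : Polynomial B} (hg : g.coeff 0 = 0) (P : Polynomial B) (n : ℕ) :
    (P.comp g).coeff n = ∑ k ∈ Finset.range (n + 1), P.coeff k * (g ^ k).coeff n := by
  rw [Polynomial.comp, Polynomial.eval₂_eq_sum_range, Polynomial.finset_sum_coeff]
  simp_rw [Polynomial.coeff_C_mul]
  rcases le_total (P.natDegree + 1) (n + 1) with h | h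
  · exact Finset.sum_subset (Finset.range_subset_range.2 h) fun k hk hk' => by
      rw [Polynomial.coeff_eq_zero_of_natDegree_lt
        (by simp only [Finset.mem_range] at hk hk'; omega), zero_mul]
  · exact (Finset.sum_subset (Finset.range_subset_range.2 h) fun k hk hk' => by
      rw [coeff_pow_eq_zero hg (by simp only [Finset.mem_range] at hk hk'; omega), mul_zero]).symm

lemma coeff_compPoly_eq {g : Polynomial B} (hg : g.coeff 0 = 0) (f : PowerSeries B) {n N : ℕ}
    (hn : n < N) :
    PowerSeries.coeff n (compPoly f g) = ((f.trunc N).comp g).coeff n := by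
  rw [compPoly, PowerSeries.coeff_mk, comp_coeff hg]
  refine Finset.sum_congr rfl fun k hk => ?_
  rw [PowerSeries.coeff_trunc, if_pos (by simp only [Finset.mem_range] at hk; omega)]

lemma compPoly_mul {g : Polynomial B} (hg : g.coeff 0 = 0) (f₁ f₂ : PowerSeries B) :
    compPoly (f₁ * f₂) g = compPoly f₁ g * compPoly f₂ g := by
  ext n
  rw [coeff_compPoly_eq hg _ (Nat.lt_succ_self n), PowerSeries.coeff_mul]
  have h1 : ∀ ab ∈ Finset.HasAntidiagonal.antidiagonal n,
      (PowerSeries.coeff ab.1 (compPoly f₁ g)) * (PowerSeries.coeff ab.2 (compPoly f₂ g))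
        = ((f₁.trunc (n+1)).comp g).coeff ab.1 * ((f₂.trunc (n+1)).comp g).coeff ab.2 := by
    intro ab hab
    rw [Finset.HasAntidiagonal.mem_antidiagonal] at hab
    rw [coeff_compPoly_eq hg _ (show ab.1 < n + 1 by omega),
      coeff_compPoly_eq hg _ (show ab.2 < n + 1 by omega)]
  rw [Finset.sum_congr rfl h1, ← Polynomial.coeff_mul, ← Polynomial.mul_comp,
    comp_coeff hg, comp_coeff hg]
  refine Finset.sum_congr rfl fun k hk => ?_
  have hk' : k < n + 1 := by simp only [Finset.mem_range] at hk; omega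
  congr 1
  rw [PowerSeries.coeff_trunc, if_pos hk',
    PowerSeries.coeff_mul_eq_coeff_trunc_mul_trunc f₁ f₂ hk', ← Polynomial.coeff_coe,
    Polynomial.coe_mul]

lemma compPoly_map {C : Type*} [CommRing C] (σ : B →+* C) (f : PowerSeries B) (g : Polynomial B) :
    PowerSeries.map σ (compPoly f g) = compPoly (PowerSeries.map σ f) (g.map σ) := by
  ext n
  rw [PowerSeries.coeff_map, compPoly, compPoly, PowerSeries.coeff_mk, PowerSeries.coeff_mk,
    map_sum]
  refine Finset.sum_congr rfl fun k _ => ?_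
  rw [map_mul, PowerSeries.coeff_map, ← Polynomial.map_pow, Polynomial.coeff_map]

lemma coeff_zero_compPoly (f : PowerSeries B) (g : Polynomial B) :
    PowerSeries.coeff 0 (compPoly f g) = PowerSeries.coeff 0 f := by
  rw [compPoly, PowerSeries.coeff_mk]
  simp


lemma coeff_mul_congr {u u' v v' : PowerSeries B} {N : ℕ}
    (hu : ∀ k < N, PowerSeries.coeff k u = PowerSeries.coeff k u')
    (hv : ∀ k < N, PowerSeries.coeff k v = PowerSeries.coeff k v') :
    ∀ k < N, PowerSeries.coeff k (u * v) = PowerSeries.coeff k (u' * v') := by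
  intro k hk
  rw [PowerSeries.coeff_mul, PowerSeries.coeff_mul]
  refine Finset.sum_congr rfl fun ab hab => ?_
  rw [Finset.HasAntidiagonal.mem_antidiagonal] at hab
  rw [hu ab.1 (by omega), hv ab.2 (by omega)]

lemma coeff_pow_congr {u u' : PowerSeries B} {N : ℕ}
    (hu : ∀ k < N, PowerSeries.coeff k u = PowerSeries.coeff k u') (j : ℕ) :
    ∀ k < N, PowerSeries.coeff k (u ^ j) = PowerSeries.coeff k (u' ^ j) := by
  induction j with
  | zero => intro k hk; rw [pow_zero, pow_zero]
  | succ j ih =>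
    intro k hk
    rw [pow_succ, pow_succ]
    exact coeff_mul_congr ih hu k hk

lemma coeff_mul_mem (S : Subring B) {u v : PowerSeries B}
    (hu : ∀ k, PowerSeries.coeff k u ∈ S) (hv : ∀ k, PowerSeries.coeff k v ∈ S) (k : ℕ) :
    PowerSeries.coeff k (u * v) ∈ S := by
  rw [PowerSeries.coeff_mul]
  exact Subring.sum_mem _ fun ab _ => S.mul_mem (hu _) (hv _)

lemma coeff_pow_mem (S : Subring B) {u : PowerSeries B}
    (hu : ∀ k, PowerSeries.coeff k u ∈ S) (j k : ℕ) :
    PowerSeries.coeff k (u ^ j) ∈ S := by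
  induction j generalizing k with
  | zero =>
    rw [pow_zero]
    rcases k with _ | k
    · rw [PowerSeries.coeff_zero_eq_constantCoeff, map_one]; exact S.one_mem
    · rw [PowerSeries.coeff_one, if_neg (Nat.succ_ne_zero k)]; exact S.zero_mem
  | succ j ih => rw [pow_succ]; exact coeff_mul_mem S (fun m => ih m) hu k

lemma coeff_X_pow_mul_of_lt {u : PowerSeries B} {j k : ℕ} (h : k < j) :
    PowerSeries.coeff k ((PowerSeries.X : PowerSeries B) ^ j * u) = 0 := by
  rw [PowerSeries.coeff_mul]
  refine Finset.sum_eq_zero fun ab hab => ?_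
  rw [Finset.HasAntidiagonal.mem_antidiagonal] at hab
  rw [PowerSeries.coeff_X_pow, if_neg (by omega), zero_mul]

lemma coeff_pow_self {g : Polynomial B} (hg : g.coeff 0 = 0) (k : ℕ) :
    (g ^ k).coeff k = g.coeff 1 ^ k := by
  induction k with
  | zero => simp
  | succ k ih =>
    rw [pow_succ', Polynomial.coeff_mul]
    rw [Finset.sum_eq_single_of_mem (1, k) (by rw [Finset.HasAntidiagonal.mem_antidiagonal]; omega)]
    · rw [ih, pow_succ']
    · rintro ⟨a, b⟩ hab hne
      rw [Finset.HasAntidiagonal.mem_antidiagonal] at hab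
      simp only at hab ⊢
      rcases Nat.lt_trichotomy b k with hb | rfl | hb
      · rw [coeff_pow_eq_zero hg hb, mul_zero]
      · exact absurd (by omega : a = 1) (by simpa using fun h' => hne (by simp [h']))
      · have : a = 0 := by omega
        subst this; rw [hg, zero_mul]

lemma G_coeff_zero (p : ℕ) (ζ : B) :
    ((Polynomial.C ζ + Polynomial.X) ^ p - Polynomial.C (ζ ^ p)).coeff 0 = 0 := by
  rw [Polynomial.coeff_sub, add_comm (Polynomial.C ζ), Polynomial.coeff_X_add_C_pow,
    Polynomial.coeff_C, if_pos rfl]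
  simp

lemma G_coeff_one (p : ℕ) (ζ : B) :
    ((Polynomial.C ζ + Polynomial.X) ^ p - Polynomial.C (ζ ^ p)).coeff 1 = ζ ^ (p - 1) * p := by
  rw [Polynomial.coeff_sub, add_comm (Polynomial.C ζ), Polynomial.coeff_X_add_C_pow,
    Polynomial.coeff_C, if_neg one_ne_zero]
  simp

end DworkAux
namespace DworkAux

lemma trunc_map {B C : Type*} [CommRing B] [CommRing C] (σ : B →+* C) (u : PowerSeries B)
    (N : ℕ) : PowerSeries.trunc N (PowerSeries.map σ u) = (PowerSeries.trunc N u).map σ := by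
  ext k
  rw [Polynomial.coeff_map, PowerSeries.coeff_trunc, PowerSeries.coeff_trunc,
    PowerSeries.coeff_map]
  split_ifs
  · rfl
  · rw [map_zero]

lemma key_congr {p : ℕ} (hp : p.Prime) {A : Type*} [CommRing A] (φ : A →+* A)
    (hfrob : ∀ a : A, ∃ b : A, φ a - a ^ p = (p : A) * b) (ζ : A)
    (PF : PowerSeries A) (n : ℕ) :
    ∃ c : A,
      PowerSeries.coeff n (compPoly (PowerSeries.map φ PF)
        ((Polynomial.C ζ + Polynomial.X) ^ p - Polynomial.C (ζ ^ p)))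
        = PowerSeries.coeff n (PF ^ p) + p * c := by
  set GA : Polynomial A := (Polynomial.C ζ + Polynomial.X) ^ p - Polynomial.C (ζ ^ p) with hGAdef
  have hGA0 : GA.coeff 0 = 0 := G_coeff_zero p ζ
  set N := n + 1 with hN
  set P : Polynomial A := PowerSeries.trunc N PF with hP
  have hL : PowerSeries.coeff n (compPoly (PowerSeries.map φ PF) GA)
      = ((P.map φ).comp GA).coeff n := by
    rw [coeff_compPoly_eq hGA0 _ (Nat.lt_succ_self n), trunc_map]
  have hR : PowerSeries.coeff n (PF ^ p) = (P ^ p).coeff n := by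
    have h1 : ∀ k < N, PowerSeries.coeff k PF = PowerSeries.coeff k (↑P : PowerSeries A) :=
      fun k hk => by rw [Polynomial.coeff_coe, hP, PowerSeries.coeff_trunc, if_pos hk]
    rw [coeff_pow_congr h1 p n (Nat.lt_succ_self n), ← Polynomial.coe_pow, Polynomial.coeff_coe]
  rw [hL, hR]
  set I : Ideal A := Ideal.span {(p : A)} with hI
  set π : A →+* A ⧸ I := Ideal.Quotient.mk I with hπ
  have hmap : ((P.map φ).comp GA - P ^ p).map π = 0 := by
    by_cases hQ : Subsingleton (A ⧸ I)
    · exact Subsingleton.elim _ _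
    haveI : Nontrivial (A ⧸ I) := not_subsingleton_iff_nontrivial.mp hQ
    have hp0 : ((p : ℕ) : A ⧸ I) = 0 := by
      rw [← map_natCast π]
      exact Ideal.Quotient.eq_zero_iff_mem.2 (Ideal.mem_span_singleton_self _)
    haveI : CharP (A ⧸ I) p := by
      have hd := ringChar.dvd hp0
      rcases (Nat.Prime.eq_one_or_self_of_dvd hp _ hd) with h1 | h1
      · exact absurd h1 CharP.ringChar_ne_one
      · exact ringChar.of_eq h1
    haveI := Fact.mk hp
    rw [Polynomial.map_sub, Polynomial.map_comp, Polynomial.map_pow]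
    have hGAm : GA.map π = Polynomial.X ^ p := by
      rw [hGAdef, Polynomial.map_sub, Polynomial.map_pow, Polynomial.map_add, Polynomial.map_C,
        Polynomial.map_X, add_pow_char, Polynomial.map_C, map_pow, ← Polynomial.C_pow]
      ring
    have hfr : (P.map φ).map π = (P.map π).map (frobenius (A ⧸ I) p) := by
      ext k
      simp only [Polynomial.coeff_map]
      obtain ⟨b, hb⟩ := hfrob (P.coeff k)
      have hφ : φ (P.coeff k) = P.coeff k ^ p + (p : A) * b := by
        rw [← hb]; ring
      rw [hφ, map_add, map_mul, map_pow, frobenius_def, map_natCast, hp0, zero_mul, add_zero]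
    rw [hGAm, hfr, ← Polynomial.expand_eq_comp_X_pow, ← Polynomial.map_expand,
      Polynomial.map_frobenius_expand, sub_self]
  have hdvd : (p : A) ∣ (((P.map φ).comp GA).coeff n - (P ^ p).coeff n) := by
    have h2 := congrArg (fun q : Polynomial (A ⧸ I) => q.coeff n) hmap
    simp only [Polynomial.coeff_map, Polynomial.coeff_zero, Polynomial.coeff_sub] at h2
    rw [← Ideal.mem_span_singleton, ← hI]
    exact Ideal.Quotient.eq_zero_iff_mem.1 h2
  obtain ⟨c, hc⟩ := hdvd
  exact ⟨c, by rw [← hc]; ring⟩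

end DworkAux

open DworkAux in
theorem statement17 (p : ℕ) (hp : p.Prime) (A : Type*) [CommRing A]
    (htf : ∀ a : A, (p : A) * a = 0 → a = 0)
    [IsAdicComplete (Ideal.span {(p : A)}) A]
    (φ : A →+* A) (hord : ∃ s : ℕ, 1 ≤ s ∧ ∀ a : A, (⇑φ)^[s] a = a)
    (hfrob : ∀ a : A, ∃ b : A, φ a - a ^ p = (p : A) * b)
    (ζ : A) (hζ : φ ζ = ζ ^ p)
    (B : Type*) [CommRing B] [Algebra A B] [IsLocalization.Away ((p : A)) B]
    (ψ : B →+* B) (hψ : ∀ a : A, ψ (algebraMap A B a) = algebraMap A B (φ a))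
    (f : PowerSeries B) (hf0 : PowerSeries.constantCoeff f = 1) :
    (∀ n : ℕ, ∃ a : A, PowerSeries.coeff n f = algebraMap A B a) ↔
      ((∃ a : A, PowerSeries.coeff 1 f = algebraMap A B a) ∧
        ∃ h : PowerSeries B,
          (∀ n : ℕ, ∃ a : A, PowerSeries.coeff n h = algebraMap A B a) ∧
          compPoly (PowerSeries.map ψ f)
              ((Polynomial.C (algebraMap A B ζ) + Polynomial.X) ^ p -
                Polynomial.C ((algebraMap A B ζ) ^ p))
            = f ^ p * (1 + (p : PowerSeries B) * (PowerSeries.X * h))) := by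

  classical
  obtain ⟨s, hs1, hs⟩ := hord
  have hppos : 0 < p := hp.pos
  -- injectivity of the localization map
  have hreg : ∀ (t : ℕ) (z : A), z * ((p : A)) ^ t = 0 → z = 0 := by
    intro t
    induction t with
    | zero => intro z hz; simpa using hz
    | succ t ih =>
      intro z hz
      refine ih z (htf _ ?_)
      rw [← hz, pow_succ]; ring
  have hMle : Submonoid.powers ((p : ℕ) : A) ≤ nonZeroDivisors A := by
    rintro x ⟨t, rfl⟩
    exact mem_nonZeroDivisors_iff_right.2 fun z hz => hreg t z hz
  have hinj : Function.Injective (algebraMap A B) := IsLocalization.injective B hMle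
  have hpB : IsUnit ((p : ℕ) : B) := by
    have h1 := IsLocalization.map_units (M := Submonoid.powers ((p : ℕ) : A)) B
      ⟨(p : A), Submonoid.mem_powers _⟩
    simpa [map_natCast] using h1
  -- the polynomial G over A and over B
  set GA : Polynomial A := (Polynomial.C ζ + Polynomial.X) ^ p - Polynomial.C (ζ ^ p) with hGAdef
  have hGA0 : GA.coeff 0 = 0 := G_coeff_zero p ζ
  have hGB : ((Polynomial.C (algebraMap A B ζ) + Polynomial.X) ^ p -
      Polynomial.C ((algebraMap A B ζ) ^ p)) = GA.map (algebraMap A B) := by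
    rw [hGAdef]
    simp only [Polynomial.map_sub, Polynomial.map_pow, Polynomial.map_add, Polynomial.map_C,
      Polynomial.map_X, map_pow]
  constructor
  · -- forward direction
    intro hA
    refine ⟨hA 1, ?_⟩
    choose lift hlift using hA
    set F : PowerSeries A := PowerSeries.mk lift with hFdef
    have hmapF : PowerSeries.map (algebraMap A B) F = f := by
      ext n
      rw [PowerSeries.coeff_map, hFdef, PowerSeries.coeff_mk, ← hlift n]
    have hF0 : PowerSeries.constantCoeff F = 1 := by
      apply hinj
      rw [map_one]
      have h1 : algebraMap A B (PowerSeries.constantCoeff F) =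
          PowerSeries.constantCoeff (PowerSeries.map (algebraMap A B) F) := by
        rw [← PowerSeries.coeff_zero_eq_constantCoeff, ← PowerSeries.coeff_zero_eq_constantCoeff,
          PowerSeries.coeff_map]
      rw [h1, hmapF, hf0]
    choose c hc using fun n => key_congr hp φ hfrob ζ F (n + 1)
    set H : PowerSeries A := PowerSeries.mk c with hHdef
    have hD : compPoly (PowerSeries.map φ F) GA
        = F ^ p + (p : PowerSeries A) * (PowerSeries.X * H) := by
      ext n
      rcases n with _ | n
      · rw [coeff_zero_compPoly, PowerSeries.coeff_map]
        have h2 : PowerSeries.coeff 0 F = 1 := by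
          rw [PowerSeries.coeff_zero_eq_constantCoeff]; exact hF0
        rw [h2, map_one, map_add]
        have h3 : PowerSeries.coeff 0 (F ^ p) = 1 := by
          rw [PowerSeries.coeff_zero_eq_constantCoeff, map_pow, hF0, one_pow]
        have h4 : PowerSeries.coeff 0 ((p : PowerSeries A) * (PowerSeries.X * H)) = 0 := by
          rw [PowerSeries.coeff_zero_eq_constantCoeff, map_mul, map_mul,
            PowerSeries.constantCoeff_X, zero_mul, mul_zero]
        rw [h3, h4, add_zero]
      · rw [hc n, map_add]
        congr 1
        have hcast : ((p : ℕ) : PowerSeries A) = PowerSeries.C ((p : ℕ) : A) := by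
          rw [map_natCast]
        rw [hcast, PowerSeries.coeff_C_mul, PowerSeries.coeff_succ_X_mul, hHdef,
          PowerSeries.coeff_mk]
    have hFinv : F * F.invOfUnit 1 = 1 := PowerSeries.mul_invOfUnit F 1 (by rw [hF0]; rfl)
    set h : PowerSeries B := PowerSeries.map (algebraMap A B) (H * (F.invOfUnit 1) ^ p)
      with hhdef
    refine ⟨h, fun n => ⟨PowerSeries.coeff n (H * (F.invOfUnit 1) ^ p), by
      rw [hhdef, PowerSeries.coeff_map]⟩, ?_⟩
    have hψf : PowerSeries.map ψ f = PowerSeries.map (algebraMap A B) (PowerSeries.map φ F) := by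
      ext n
      rw [PowerSeries.coeff_map, PowerSeries.coeff_map, PowerSeries.coeff_map, hlift n, hψ,
        hFdef, PowerSeries.coeff_mk]
    have hkey : PowerSeries.map (algebraMap A B) ((F.invOfUnit 1) ^ p) * f ^ p = 1 := by
      rw [← hmapF, ← map_pow, ← map_mul, ← mul_pow, mul_comm (F.invOfUnit 1) F, hFinv, one_pow,
        map_one]
    rw [hψf, hGB, ← compPoly_map, hD, map_add, map_mul, map_mul, PowerSeries.map_X, map_pow,
      hmapF, map_natCast]
    rw [hhdef, map_mul]
    linear_combination (-((p : PowerSeries B) * PowerSeries.X *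
      PowerSeries.map (algebraMap A B) H)) * hkey
  · -- backward direction
    rintro ⟨hb1, h, hh, heq⟩
    intro n
    induction n using Nat.strong_induction_on with
    | _ n IH =>
    rcases n with _ | _ | m
    · exact ⟨1, by rw [PowerSeries.coeff_zero_eq_constantCoeff, hf0, map_one]⟩
    · exact hb1
    set R : Subring B := (algebraMap A B).range with hRdef
    have hfk : ∀ k, k < m + 2 → ∃ a : A, PowerSeries.coeff k f = algebraMap A B a :=
      fun k hk => IH k hk
    set FA : PowerSeries A := PowerSeries.mk
      (fun k => if hk : k < m + 2 then (hfk k hk).choose else 0) with hFAdef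
    set gB : PowerSeries B := PowerSeries.map (algebraMap A B) FA with hgBdef
    have hgB : ∀ k, k < m + 2 → PowerSeries.coeff k gB = PowerSeries.coeff k f := by
      intro k hk
      rw [hgBdef, PowerSeries.coeff_map, hFAdef, PowerSeries.coeff_mk, dif_pos hk,
        ← (hfk k hk).choose_spec]
    have hgBhigh : ∀ k, m + 2 ≤ k → PowerSeries.coeff k gB = 0 := by
      intro k hk
      rw [hgBdef, PowerSeries.coeff_map, hFAdef, PowerSeries.coeff_mk, dif_neg (by omega),
        map_zero]
    have hgBmem : ∀ k, PowerSeries.coeff k gB ∈ R := fun k =>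
      ⟨PowerSeries.coeff k FA, by rw [hgBdef, PowerSeries.coeff_map]⟩
    have hg0 : PowerSeries.constantCoeff gB = 1 := by
      rw [← PowerSeries.coeff_zero_eq_constantCoeff, hgB 0 (by omega),
        PowerSeries.coeff_zero_eq_constantCoeff, hf0]
    set t : PowerSeries B := PowerSeries.mk (fun k => PowerSeries.coeff (m + 2 + k) f)
      with htdef
    have hft : f = gB + PowerSeries.X ^ (m + 2) * t := by
      ext k
      rw [map_add]
      rcases lt_or_ge k (m + 2) with hk | hk
      · rw [hgB k hk, coeff_X_pow_mul_of_lt hk, add_zero]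
      · obtain ⟨d, rfl⟩ : ∃ d, k = d + (m + 2) := ⟨k - (m + 2), by omega⟩
        rw [PowerSeries.coeff_X_pow_mul, htdef, PowerSeries.coeff_mk, hgBhigh _ (by omega),
          zero_add]
        have he : m + 2 + d = d + (m + 2) := by omega
        rw [he]
    have hfgpow : ∀ k, k < m + 2 →
        PowerSeries.coeff k (f ^ p) = PowerSeries.coeff k (gB ^ p) :=
      coeff_pow_congr (fun k hk => (hgB k hk).symm) p
    -- the key coefficient of f^p
    have hfp : PowerSeries.coeff (m + 2) (f ^ p) =
        PowerSeries.coeff (m + 2) (gB ^ p) + (p : B) * PowerSeries.coeff (m + 2) f := by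
      conv_lhs => rw [hft, add_pow]
      rw [map_sum]
      have hsub : ({p - 1, p} : Finset ℕ) ⊆ Finset.range (p + 1) := by
        intro x hx
        simp only [Finset.mem_insert, Finset.mem_singleton] at hx
        rcases hx with rfl | rfl <;> simp only [Finset.mem_range] <;> omega
      rw [← Finset.sum_subset hsub (by
        intro k hk hknot
        simp only [Finset.mem_range] at hk
        simp only [Finset.mem_insert, Finset.mem_singleton] at hknot
        have h2 : 2 ≤ p - k := by
          have := hp.two_le
          omega
        have hre : gB ^ k * (PowerSeries.X ^ (m + 2) * t) ^ (p - k) * (p.choose k : PowerSeries B)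
            = PowerSeries.X ^ ((m + 2) * (p - k)) *
              (gB ^ k * t ^ (p - k) * (p.choose k : PowerSeries B)) := by
          rw [mul_pow, ← pow_mul]
          ring
        rw [hre]
        exact coeff_X_pow_mul_of_lt (by
          have := Nat.mul_le_mul_left (m + 2) h2
          omega))]
      have hne : (p - 1) ∉ ({p} : Finset ℕ) := by
        simp only [Finset.mem_singleton]
        have := hp.two_le
        omega
      rw [Finset.sum_insert hne, Finset.sum_singleton]
      have e0 : p - p = 0 := by omega
      have e1 : p - (p - 1) = 1 := by have := hp.two_le; omega
      have echoose : (p.choose (p - 1) : PowerSeries B) = (p : PowerSeries B) := by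
        have hcs : p.choose (p - 1) = p := by
          rw [Nat.choose_symm hp.one_lt.le, Nat.choose_one_right]
        rw [hcs]
      rw [e0, e1, pow_zero, mul_one, Nat.choose_self, Nat.cast_one, mul_one, pow_one, echoose]
      have hre2 : gB ^ (p - 1) * (PowerSeries.X ^ (m + 2) * t) * (p : PowerSeries B)
          = PowerSeries.X ^ (m + 2) * (gB ^ (p - 1) * t * (p : PowerSeries B)) := by ring
      have h4 : PowerSeries.coeff (m + 2) (PowerSeries.X ^ (m + 2) *
          (gB ^ (p - 1) * t * (p : PowerSeries B))) = PowerSeries.coeff 0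
          (gB ^ (p - 1) * t * (p : PowerSeries B)) := by
        have h4' := PowerSeries.coeff_X_pow_mul (gB ^ (p - 1) * t * (p : PowerSeries B)) (m + 2) 0
        rwa [zero_add] at h4'
      have h5 : PowerSeries.coeff 0 (gB ^ (p - 1) * t * (p : PowerSeries B))
          = PowerSeries.coeff (m + 2) f * ((p : ℕ) : B) := by
        rw [PowerSeries.coeff_zero_eq_constantCoeff, map_mul, map_mul, map_pow, hg0, one_pow,
          one_mul, htdef]
        have h5' : PowerSeries.constantCoeff (PowerSeries.mk
            (fun k => PowerSeries.coeff (m + 2 + k) f)) = PowerSeries.coeff (m + 2 + 0) f := by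
          rw [← PowerSeries.coeff_zero_eq_constantCoeff, PowerSeries.coeff_mk]
        rw [h5', map_natCast, Nat.add_zero]
      rw [hre2, h4, h5]
      ring
    -- membership facts for X * h
    have hXh0 : PowerSeries.coeff 0 (PowerSeries.X * h) = 0 := by
      rw [PowerSeries.coeff_zero_eq_constantCoeff, map_mul, PowerSeries.constantCoeff_X, zero_mul]
    have hXhmem : ∀ k, PowerSeries.coeff k (PowerSeries.X * h) ∈ R := by
      intro k
      rcases k with _ | k
      · rw [hXh0]; exact R.zero_mem
      · rw [PowerSeries.coeff_succ_X_mul]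
        obtain ⟨a, ha⟩ := hh k
        exact ⟨a, ha.symm⟩
    have hfpXh : PowerSeries.coeff (m + 2) (f ^ p * (PowerSeries.X * h)) ∈ R := by
      rw [PowerSeries.coeff_mul]
      refine Subring.sum_mem _ fun ab hab => ?_
      rw [Finset.HasAntidiagonal.mem_antidiagonal] at hab
      rcases Nat.eq_zero_or_pos ab.2 with h2 | h2
      · rw [h2, hXh0, mul_zero]; exact R.zero_mem
      · have h1 : ab.1 < m + 2 := by omega
        exact R.mul_mem (by rw [hfgpow ab.1 h1]; exact coeff_pow_mem R hgBmem p ab.1)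
          (hXhmem ab.2)
    obtain ⟨d, hd⟩ : ∃ d : A, PowerSeries.coeff (m + 2) (f ^ p * (PowerSeries.X * h))
        = algebraMap A B d := by
      obtain ⟨d, hd⟩ := hfpXh
      exact ⟨d, hd.symm⟩
    -- the right-hand side coefficient
    have hRHS : PowerSeries.coeff (m + 2)
        (f ^ p * (1 + (p : PowerSeries B) * (PowerSeries.X * h)))
        = PowerSeries.coeff (m + 2) (gB ^ p) + (p : B) * PowerSeries.coeff (m + 2) f
          + (p : B) * algebraMap A B d := by
      rw [mul_add, mul_one, map_add, hfp]
      have hrew : f ^ p * ((p : PowerSeries B) * (PowerSeries.X * h))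
          = PowerSeries.C ((p : ℕ) : B) * (f ^ p * (PowerSeries.X * h)) := by
        rw [map_natCast (PowerSeries.C) p]
        ring
      rw [hrew, PowerSeries.coeff_C_mul, hd]
    -- the left-hand side coefficient
    have hGB0' : (GA.map (algebraMap A B)).coeff 0 = 0 := by
      rw [Polynomial.coeff_map, hGA0, map_zero]
    have hsplit : PowerSeries.coeff (m + 2) (compPoly (PowerSeries.map ψ f)
        (GA.map (algebraMap A B)))
        = PowerSeries.coeff (m + 2) (compPoly (PowerSeries.map ψ gB) (GA.map (algebraMap A B)))
          + ψ (PowerSeries.coeff (m + 2) f) *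
            ((GA.map (algebraMap A B)) ^ (m + 2)).coeff (m + 2) := by
      have hsum : ∀ u : PowerSeries B, (∑ k ∈ Finset.range (m + 2 + 1),
          PowerSeries.coeff k (PowerSeries.map ψ u) *
            ((GA.map (algebraMap A B)) ^ k).coeff (m + 2))
          = (∑ k ∈ Finset.range (m + 2), ψ (PowerSeries.coeff k u) *
              ((GA.map (algebraMap A B)) ^ k).coeff (m + 2))
            + ψ (PowerSeries.coeff (m + 2) u) *
              ((GA.map (algebraMap A B)) ^ (m + 2)).coeff (m + 2) := by
        intro u
        rw [Finset.sum_range_succ]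
        congr 1
      rw [compPoly, compPoly, PowerSeries.coeff_mk, PowerSeries.coeff_mk, hsum f, hsum gB,
        hgBhigh (m + 2) le_rfl, map_zero, zero_mul, add_zero]
      refine congrArg₂ (· + ·) ?_ rfl
      refine Finset.sum_congr rfl fun k hk => ?_
      rw [hgB k (Finset.mem_range.mp hk)]
    have hmapeq : PowerSeries.map ψ gB
        = PowerSeries.map (algebraMap A B) (PowerSeries.map φ FA) := by
      ext k
      simp only [hgBdef, PowerSeries.coeff_map]
      rw [hψ]
    have hcompgB : compPoly (PowerSeries.map ψ gB) (GA.map (algebraMap A B))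
        = PowerSeries.map (algebraMap A B) (compPoly (PowerSeries.map φ FA) GA) := by
      rw [hmapeq]
      exact (compPoly_map _ _ _).symm
    obtain ⟨c, hc⟩ := key_congr hp φ hfrob ζ FA (m + 2)
    have hcompval : PowerSeries.coeff (m + 2) (compPoly (PowerSeries.map ψ gB)
        (GA.map (algebraMap A B)))
        = PowerSeries.coeff (m + 2) (gB ^ p) + (p : B) * algebraMap A B c := by
      rw [hcompgB, PowerSeries.coeff_map, hc, map_add, map_mul, map_natCast]
      congr 1
      rw [hgBdef, ← map_pow, PowerSeries.coeff_map]
    -- the coefficient of G^(m+2)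
    set w₀ : A := (ζ ^ (p - 1)) ^ (m + 2) * ((p : ℕ) : A) ^ (m + 1) with hw₀def
    have hGtop : ((GA.map (algebraMap A B)) ^ (m + 2)).coeff (m + 2)
        = (p : B) * algebraMap A B w₀ := by
      rw [coeff_pow_self hGB0', Polynomial.coeff_map]
      have hGA1 : GA.coeff 1 = ζ ^ (p - 1) * ((p : ℕ) : A) := G_coeff_one p ζ
      rw [hGA1, ← map_pow]
      have : (ζ ^ (p - 1) * ((p : ℕ) : A)) ^ (m + 2) = ((p : ℕ) : A) * w₀ := by
        rw [hw₀def]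
        ring
      rw [this, map_mul, map_natCast]
    -- assemble the main coefficient identity
    have hLHS := congrArg (PowerSeries.coeff (m + 2)) heq
    rw [hGB] at hLHS
    rw [hsplit, hcompval, hGtop, hRHS] at hLHS
    -- cancel p
    have hone : algebraMap A B c + ψ (PowerSeries.coeff (m + 2) f) * algebraMap A B w₀
        = PowerSeries.coeff (m + 2) f + algebraMap A B d := by
      refine hpB.mul_left_cancel ?_
      linear_combination hLHS
    have hstep : PowerSeries.coeff (m + 2) f
        = ψ (PowerSeries.coeff (m + 2) f) * algebraMap A B w₀ + algebraMap A B (c - d) := by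
      rw [map_sub]
      linear_combination -hone
    -- iterate ψ
    have hit_alg : ∀ (k : ℕ) (a : A), (⇑ψ)^[k] (algebraMap A B a)
        = algebraMap A B ((⇑φ)^[k] a) := by
      intro k
      induction k with
      | zero => intro a; rfl
      | succ k ih =>
        intro a
        rw [Function.iterate_succ_apply, Function.iterate_succ_apply, hψ, ih]
    have hit_add : ∀ (k : ℕ) (x y : B), (⇑ψ)^[k] (x + y) = (⇑ψ)^[k] x + (⇑ψ)^[k] y := by
      intro k
      induction k with
      | zero => intro x y; rfl
      | succ k ih =>
        intro x y
        rw [Function.iterate_succ_apply, map_add, ih, Function.iterate_succ_apply,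
          Function.iterate_succ_apply]
    have hit_mul : ∀ (k : ℕ) (x y : B), (⇑ψ)^[k] (x * y) = (⇑ψ)^[k] x * (⇑ψ)^[k] y := by
      intro k
      induction k with
      | zero => intro x y; rfl
      | succ k ih =>
        intro x y
        rw [Function.iterate_succ_apply, map_mul, ih, Function.iterate_succ_apply,
          Function.iterate_succ_apply]
    have hitφ_mul : ∀ (k : ℕ) (x y : A), (⇑φ)^[k] (x * y) = (⇑φ)^[k] x * (⇑φ)^[k] y := by
      intro k
      induction k with
      | zero => intro x y; rfl
      | succ k ih =>
        intro x y
        rw [Function.iterate_succ_apply, map_mul, ih, Function.iterate_succ_apply,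
          Function.iterate_succ_apply]
    have hφp : ∀ k : ℕ, (⇑φ)^[k] (((p : ℕ) : A)) = ((p : ℕ) : A) := by
      intro k
      induction k with
      | zero => rfl
      | succ k ih => rw [Function.iterate_succ_apply, map_natCast, ih]
    have hfix : ∀ b : B, (⇑ψ)^[s] b = b := by
      intro b
      obtain ⟨⟨a, m'⟩, hm⟩ := IsLocalization.surj (Submonoid.powers ((p : ℕ) : A)) b
      have h1 : (⇑ψ)^[s] b * algebraMap A B (↑m' : A) = b * algebraMap A B (↑m' : A) := by
        calc (⇑ψ)^[s] b * algebraMap A B (↑m' : A)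
            = (⇑ψ)^[s] b * (⇑ψ)^[s] (algebraMap A B (↑m' : A)) := by
              rw [hit_alg, hs]
          _ = (⇑ψ)^[s] (b * algebraMap A B (↑m' : A)) := (hit_mul s _ _).symm
          _ = (⇑ψ)^[s] (algebraMap A B a) := by rw [hm]
          _ = algebraMap A B a := by rw [hit_alg, hs]
          _ = b * algebraMap A B (↑m' : A) := hm.symm
      exact (IsLocalization.map_units B m').mul_right_cancel h1
    have hpw : ∀ k : ℕ, (p : A) ∣ (⇑φ)^[k] w₀ := by
      intro k
      have hw1 : w₀ = ((p : ℕ) : A) * ((ζ ^ (p - 1)) ^ (m + 2) * ((p : ℕ) : A) ^ m) := by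
        rw [hw₀def]; ring
      refine ⟨(⇑φ)^[k] ((ζ ^ (p - 1)) ^ (m + 2) * ((p : ℕ) : A) ^ m), ?_⟩
      rw [hw1, hitφ_mul, hφp]
    have hiter : ∀ k : ℕ, ∃ u v : A, PowerSeries.coeff (m + 2) f
        = algebraMap A B u + algebraMap A B v * (⇑ψ)^[k] (PowerSeries.coeff (m + 2) f)
        ∧ (1 ≤ k → (p : A) ∣ v) := by
      intro k
      induction k with
      | zero =>
        refine ⟨0, 1, ?_, by omega⟩
        rw [map_zero, map_one, Function.iterate_zero_apply]
        ring
      | succ k ih =>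
        obtain ⟨u, v, huv, hv⟩ := ih
        refine ⟨u + v * (⇑φ)^[k] (c - d), v * (⇑φ)^[k] w₀, ?_, fun _ => ?_⟩
        · have h2 : (⇑ψ)^[k] (PowerSeries.coeff (m + 2) f)
              = (⇑ψ)^[k + 1] (PowerSeries.coeff (m + 2) f) * algebraMap A B ((⇑φ)^[k] w₀)
                + algebraMap A B ((⇑φ)^[k] (c - d)) := by
            have h3 := congrArg (⇑ψ)^[k] hstep
            rw [hit_add, hit_mul, hit_alg, hit_alg, ← Function.iterate_succ_apply] at h3
            exact h3
          rw [h2] at huv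
          rw [map_add, map_mul, map_mul]
          linear_combination huv
        · exact (hpw k).mul_left v
    obtain ⟨u, v, huv, hv⟩ := hiter s
    obtain ⟨v₀, hv₀⟩ := hv hs1
    rw [hfix] at huv
    have hjac : IsUnit (1 - v) := by
      have h1 : (p : A) ∈ (⊥ : Ideal A).jacobson :=
        IsAdicComplete.le_jacobson_bot _ (Ideal.mem_span_singleton_self _)
      have h2 : v ∈ (⊥ : Ideal A).jacobson := by
        rw [hv₀]
        exact Ideal.mul_mem_right _ _ h1
      rw [Ideal.mem_jacobson_bot] at h2
      have h3 := h2 (-1)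
      have h4 : v * (-1) + 1 = 1 - v := by ring
      rwa [h4] at h3
    obtain ⟨uu, huu⟩ := hjac
    refine ⟨u * ((↑uu⁻¹ : A)), ?_⟩
    have h4 : PowerSeries.coeff (m + 2) f * algebraMap A B (1 - v) = algebraMap A B u := by
      rw [map_sub, map_one]
      linear_combination huv
    have h5 : algebraMap A B (1 - v) * algebraMap A B ((↑uu⁻¹ : A)) = 1 := by
      rw [← map_mul, ← huu, Units.mul_inv, map_one]
    calc PowerSeries.coeff (m + 2) f
        = PowerSeries.coeff (m + 2) f *
          (algebraMap A B (1 - v) * algebraMap A B ((↑uu⁻¹ : A))) := by rw [h5, mul_one]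
      _ = algebraMap A B u * algebraMap A B ((↑uu⁻¹ : A)) := by rw [← mul_assoc, h4]
      _ = algebraMap A B (u * ((↑uu⁻¹ : A))) := by rw [map_mul]
end

section
/- Let R be a torsion-free commutative ring, and let 𝐇_R := lim_n R[q]/((q;q)_n R[q]) be the (naive) Habiro ring of R, where (q;q)_n := ∏_{j=1}^n (1−q^j). For each m ≥ 1 set R[ζ_m] := R[X]/(Φ_m(X)) with ζ_m the class of X, and let ι_m : 𝐇_R → R[ζ_m][[u]] be the ring homomorphism induced by the maps R[q]/((q;q)_n) → R[ζ_m][u]/(u^j) sending q to ζ_m(1−u); these are well defined because (q;q)_n maps into the ideal (u^j) whenever n ≥ mj. Then the combined map ι = (ι_m)_{m≥1} : 𝐇_R → ∏_{m≥1} R[ζ_m][[u]] is injective. -/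
/-!
STATEMENT 18: For a torsion-free commutative ring `R`, the combined expansion map
`ι = (ι_m)` from the naive Habiro ring `𝐇_R = lim_n R[q]/((q;q)_n)` to
`∏_m R[ζ_m][[u]]` (where `q ↦ ζ_m(1-u)` and `R[ζ_m] = R[X]/(Φ_m)`) is injective.
An element of `𝐇_R` is a compatible family `x = (x_n)`; injectivity of the additive map
`ι` is expressed as: if all coefficients of all expansions of `x` vanish, then `x = 0`.
The coefficient of `u^j` of `ι_m(x)` is computed from any representative `P` of `x_n`
with `n ≥ m(j+1)` (it is then independent of the choices).
-/

/-- `(q;q)_n = ∏_{j=1}^n (1 - q^j)` as a polynomial. -/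
noncomputable def pochP (R : Type*) [CommRing R] (n : ℕ) : Polynomial R :=
  ∏ j ∈ Finset.range n, (1 - Polynomial.X ^ (j + 1))

/-- The ideal `((q;q)_n)` of `R[q]`. -/
noncomputable def pochIdeal (R : Type*) [CommRing R] (n : ℕ) : Ideal (Polynomial R) :=
  Ideal.span {pochP R n}

theorem pochIdeal_le (R : Type*) [CommRing R] (n : ℕ) :
    pochIdeal R (n + 1) ≤ pochIdeal R n := by
  apply Ideal.span_singleton_le_span_singleton.mpr
  exact ⟨1 - Polynomial.X ^ (n + 1), Finset.prod_range_succ _ n⟩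

/-- `R[ζ_m] := R[X]/(Φ_m)`. -/
abbrev cycQuot (R : Type*) [CommRing R] (m : ℕ) :=
  Polynomial R ⧸ Ideal.span {Polynomial.cyclotomic m R}

/-- The class `ζ_m` of `X` in `R[ζ_m]`. -/
noncomputable def zetaBar (R : Type*) [CommRing R] (m : ℕ) : cycQuot R m :=
  Ideal.Quotient.mk _ Polynomial.X

/-- The expansion map `R[q] → R[ζ_m][[u]]`, `q ↦ ζ_m(1-u)`. -/
noncomputable def expandAt (R : Type*) [CommRing R] (m : ℕ) :
    Polynomial R →+* PowerSeries (cycQuot R m) :=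
  Polynomial.eval₂RingHom
    ((PowerSeries.C (R := cycQuot R m)).comp
      ((Ideal.Quotient.mk (Ideal.span {Polynomial.cyclotomic m R})).comp
        (Polynomial.C : R →+* Polynomial R)))
    (PowerSeries.C (R := cycQuot R m) (zetaBar R m) * (1 - PowerSeries.X))

section AuxHabiro
open Polynomial Finset

section IBez
variable {A : Type*} [CommRing A]

/-- Bezout identity up to a nonzero integer constant. -/
def IBez (f g : Polynomial A) : Prop :=
  ∃ u v : Polynomial A, ∃ d : ℤ, d ≠ 0 ∧ u * f + v * g = (d : Polynomial A)

theorem IBez.map {B : Type*} [CommRing B] (φ : B →+* A) {f g : Polynomial B}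
    (h : IBez f g) : IBez (f.map φ) (g.map φ) := by
  obtain ⟨u, v, d, hd, huv⟩ := h
  refine ⟨u.map φ, v.map φ, d, hd, ?_⟩
  have := congrArg (Polynomial.map φ) huv
  simpa [Polynomial.map_mul, Polynomial.map_add] using this

theorem ibez_of_isCoprime_rat {f g : Polynomial ℤ}
    (h : IsCoprime (f.map (Int.castRingHom ℚ)) (g.map (Int.castRingHom ℚ))) : IBez f g := by
  obtain ⟨u, v, huv⟩ := h
  obtain ⟨b₁, hb₁⟩ := IsLocalization.integerNormalization_map_to_map (nonZeroDivisors ℤ) u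
  obtain ⟨b₂, hb₂⟩ := IsLocalization.integerNormalization_map_to_map (nonZeroDivisors ℤ) v
  set U := IsLocalization.integerNormalization (nonZeroDivisors ℤ) u with hU
  set V := IsLocalization.integerNormalization (nonZeroDivisors ℤ) v with hV
  have hb₁' : (b₁ : ℤ) ≠ 0 := nonZeroDivisors.coe_ne_zero b₁
  have hb₂' : (b₂ : ℤ) ≠ 0 := nonZeroDivisors.coe_ne_zero b₂
  refine ⟨((b₂ : ℤ) : Polynomial ℤ) * U, ((b₁ : ℤ) : Polynomial ℤ) * V,
    (b₁ : ℤ) * (b₂ : ℤ), mul_ne_zero hb₁' hb₂', ?_⟩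
  apply Polynomial.map_injective (Int.castRingHom ℚ) Int.cast_injective
  have e1 : U.map (Int.castRingHom ℚ) = ((b₁ : ℤ) : Polynomial ℚ) * u := by
    rw [show (Int.castRingHom ℚ) = algebraMap ℤ ℚ from rfl, hb₁, zsmul_eq_mul]
  have e2 : V.map (Int.castRingHom ℚ) = ((b₂ : ℤ) : Polynomial ℚ) * v := by
    rw [show (Int.castRingHom ℚ) = algebraMap ℤ ℚ from rfl, hb₂, zsmul_eq_mul]
  simp only [Polynomial.map_add, Polynomial.map_mul, Polynomial.map_intCast, e1, e2]
  calc ((b₂:ℤ) : Polynomial ℚ) * (((b₁:ℤ) : Polynomial ℚ) * u) * f.map (Int.castRingHom ℚ)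
        + ((b₁:ℤ) : Polynomial ℚ) * (((b₂:ℤ) : Polynomial ℚ) * v) * g.map (Int.castRingHom ℚ)
      = ((b₁:ℤ) : Polynomial ℚ) * ((b₂:ℤ) : Polynomial ℚ)
          * (u * f.map (Int.castRingHom ℚ) + v * g.map (Int.castRingHom ℚ)) := by ring
    _ = (((b₁ : ℤ) * (b₂ : ℤ) : ℤ) : Polynomial ℚ) := by rw [huv]; push_cast; ring

theorem ibez_cyclotomic_deriv (m : ℕ) (hm : 0 < m) :
    IBez (cyclotomic m A) (derivative (cyclotomic m A)) := by
  have hsep : (cyclotomic m ℚ).Separable := by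
    refine Polynomial.Separable.of_dvd ?_ (cyclotomic.dvd_X_pow_sub_one m ℚ)
    exact Polynomial.X_pow_sub_one_separable_iff.mpr (by exact_mod_cast hm.ne')
  have h : IBez (cyclotomic m ℤ) (derivative (cyclotomic m ℤ)) := by
    apply ibez_of_isCoprime_rat
    rw [map_cyclotomic m (Int.castRingHom ℚ), ← derivative_map, map_cyclotomic]
    exact hsep
  have := h.map (Int.castRingHom A)
  rwa [map_cyclotomic, ← derivative_map, map_cyclotomic] at this

theorem ibez_cyclotomic_ne {m n : ℕ} (h : m ≠ n) :
    IBez (cyclotomic m A) (cyclotomic n A) := by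
  have hZ : IBez (cyclotomic m ℤ) (cyclotomic n ℤ) := by
    apply ibez_of_isCoprime_rat
    rw [map_cyclotomic, map_cyclotomic]
    exact cyclotomic.isCoprime_rat h
  have := hZ.map (Int.castRingHom A)
  rwa [map_cyclotomic, map_cyclotomic] at this


theorem IBez.pow {f g : Polynomial A} (h : IBez f g) (i j : ℕ) : IBez (f ^ i) (g ^ j) := by
  obtain ⟨u, v, d, hd, huv⟩ := h
  have hmem : ((d : Polynomial A)) ^ (i + j) ∈ Ideal.span ({f ^ i, g ^ j} : Set (Polynomial A)) := by
    rw [← huv, add_pow]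
    apply Ideal.sum_mem
    intro k hk
    rcases le_or_gt i k with hik | hik
    · have : (u * f) ^ k * (v * g) ^ (i + j - k) * ((i+j).choose k : Polynomial A)
          = (u ^ k * f ^ (k - i) * (v * g) ^ (i + j - k) * ((i+j).choose k : Polynomial A)) * f ^ i := by
        rw [mul_pow]
        have : f ^ k = f ^ (k - i) * f ^ i := by rw [← pow_add, Nat.sub_add_cancel hik]
        rw [this]; ring
      rw [this]
      exact Ideal.mul_mem_left _ _ (Ideal.subset_span (by simp))
    · have hjk : j ≤ i + j - k := by omega
      have : (u * f) ^ k * (v * g) ^ (i + j - k) * ((i+j).choose k : Polynomial A)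
          = ((u * f) ^ k * v ^ (i + j - k) * g ^ (i + j - k - j) * ((i+j).choose k : Polynomial A)) * g ^ j := by
        rw [mul_pow (v) g]
        have : g ^ (i + j - k) = g ^ (i + j - k - j) * g ^ j := by
          rw [← pow_add, Nat.sub_add_cancel hjk]
        rw [this]; ring
      rw [this]
      exact Ideal.mul_mem_left _ _ (Ideal.subset_span (by simp))
  obtain ⟨a, b, hab⟩ := Ideal.mem_span_pair.mp hmem
  exact ⟨a, b, d ^ (i + j), pow_ne_zero _ hd, by rw [hab]; push_cast; ring⟩

theorem IBez.one_right (f : Polynomial A) : IBez f 1 :=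
  ⟨0, 1, 1, one_ne_zero, by simp⟩

theorem IBez.mul_right {f g h : Polynomial A} (h1 : IBez f g) (h2 : IBez f h) :
    IBez f (g * h) := by
  obtain ⟨u, v, d, hd, huv⟩ := h1
  obtain ⟨u', v', d', hd', huv'⟩ := h2
  refine ⟨u * u' * f + u * v' * h + v * g * u', v * v', d * d', mul_ne_zero hd hd', ?_⟩
  have : ((d * d' : ℤ) : Polynomial A) = (u * f + v * g) * (u' * f + v' * h) := by
    rw [huv, huv']; push_cast; ring
  rw [this]; ring

theorem IBez.prod_right {ι : Type*} (s : Finset ι) (f : Polynomial A) (G : ι → Polynomial A)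
    (h : ∀ i ∈ s, IBez f (G i)) : IBez f (∏ i ∈ s, G i) :=
  Finset.prod_induction G (IBez f) (fun _ _ => IBez.mul_right) (IBez.one_right f) h

theorem IBez.combine_dvd {f g P : Polynomial A} (h : IBez f g) (hf : f ∣ P) (hg : g ∣ P) :
    ∃ d : ℤ, d ≠ 0 ∧ f * g ∣ (d : Polynomial A) * P := by
  obtain ⟨u, v, d, hd, huv⟩ := h
  obtain ⟨F, hF⟩ := hf
  obtain ⟨G, hG⟩ := hg
  refine ⟨d, hd, u * G + v * F, ?_⟩
  rw [← huv]
  calc (u * f + v * g) * P = u * f * (g * G) + v * g * (f * F) := by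
        rw [← hF, ← hG]; ring
    _ = f * g * (u * G + v * F) := by ring

theorem combine_prod {ι : Type*} (s : Finset ι) (F : ι → Polynomial A) (P : Polynomial A)
    (hbez : ∀ i ∈ s, ∀ j ∈ s, i ≠ j → IBez (F i) (F j))
    (hdvd : ∀ i ∈ s, ∃ d : ℤ, d ≠ 0 ∧ F i ∣ (d : Polynomial A) * P) :
    ∃ d : ℤ, d ≠ 0 ∧ (∏ i ∈ s, F i) ∣ (d : Polynomial A) * P := by
  classical
  revert hbez hdvd
  induction s using Finset.induction_on with
  | empty => exact fun _ _ => ⟨1, one_ne_zero, by simp⟩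
  | @insert a s ha ih =>
    intro hbez hdvd
    obtain ⟨d₁, hd₁, hD₁⟩ := ih
      (fun i hi j hj hij => hbez i (Finset.mem_insert_of_mem hi) j (Finset.mem_insert_of_mem hj) hij)
      (fun i hi => hdvd i (Finset.mem_insert_of_mem hi))
    obtain ⟨d₂, hd₂, hD₂⟩ := hdvd a (Finset.mem_insert_self a s)
    have hbezas : IBez (F a) (∏ i ∈ s, F i) :=
      IBez.prod_right s (F a) F (fun i hi =>
        hbez a (Finset.mem_insert_self a s) i (Finset.mem_insert_of_mem hi)
          (fun h => ha (h ▸ hi)))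
    have hfa : F a ∣ ((d₁ * d₂ : ℤ) : Polynomial A) * P := by
      refine hD₂.trans ⟨(d₁ : Polynomial A), ?_⟩
      push_cast; ring
    have hps : (∏ i ∈ s, F i) ∣ ((d₁ * d₂ : ℤ) : Polynomial A) * P := by
      refine hD₁.trans ⟨(d₂ : Polynomial A), ?_⟩
      push_cast; ring
    obtain ⟨d₃, hd₃, hD₃⟩ := hbezas.combine_dvd hfa hps
    refine ⟨d₃ * (d₁ * d₂), mul_ne_zero hd₃ (mul_ne_zero hd₁ hd₂), ?_⟩
    rw [Finset.prod_insert ha]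
    have : ((d₃ * (d₁ * d₂) : ℤ) : Polynomial A) * P
        = (d₃ : Polynomial A) * (((d₁ * d₂ : ℤ) : Polynomial A) * P) := by push_cast; ring
    rw [this]
    exact hD₃
end IBez

section Hasse
variable {A : Type*} [CommRing A]

theorem dvd_hasseDeriv_pow (Φ : Polynomial A) :
    ∀ e k : ℕ, k < e → Φ ∣ hasseDeriv k (Φ ^ e) := by
  intro e
  induction e with
  | zero => omega
  | succ e ih =>
    intro k hk
    rw [pow_succ, hasseDeriv_mul]
    apply Finset.dvd_sum
    rintro ⟨i, j⟩ hij
    rw [Finset.HasAntidiagonal.mem_antidiagonal] at hij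
    rcases Nat.eq_zero_or_pos j with hj | hj
    · subst hj
      simp only [hasseDeriv_zero']
      exact Dvd.dvd.mul_left (dvd_refl Φ) _
    · have hi : i < e := by omega
      exact (ih i hi).mul_right _

theorem hasseDeriv_pow_sub_deriv_pow (Φ : Polynomial A) :
    ∀ e : ℕ, Φ ∣ hasseDeriv e (Φ ^ e) - (derivative Φ) ^ e := by
  intro e
  induction e with
  | zero => simp
  | succ e ih =>
    rw [pow_succ, hasseDeriv_mul]
    have hmem : ((e, 1) : ℕ × ℕ) ∈ antidiagonal (e + 1) := by
      rw [Finset.HasAntidiagonal.mem_antidiagonal]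
    rw [← Finset.add_sum_erase _ _ hmem]
    have key : hasseDeriv e (Φ ^ e) * hasseDeriv 1 Φ - derivative Φ ^ (e + 1)
        = (hasseDeriv e (Φ ^ e) - derivative Φ ^ e) * derivative Φ := by
      rw [hasseDeriv_one']; ring
    have : hasseDeriv e (Φ ^ e) * hasseDeriv 1 Φ +
          (∑ ij ∈ (antidiagonal (e + 1)).erase (e, 1), hasseDeriv ij.1 (Φ ^ e) * hasseDeriv ij.2 Φ)
          - derivative Φ ^ (e + 1)
        = (hasseDeriv e (Φ ^ e) - derivative Φ ^ e) * derivative Φ +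
          ∑ ij ∈ (antidiagonal (e + 1)).erase (e, 1), hasseDeriv ij.1 (Φ ^ e) * hasseDeriv ij.2 Φ := by
      rw [← key]; ring
    rw [this]
    apply dvd_add
    · exact ih.mul_right _
    · apply Finset.dvd_sum
      rintro ⟨i, j⟩ hij
      have h1 := Finset.mem_of_mem_erase hij
      have h2 := Finset.ne_of_mem_erase hij
      rw [Finset.HasAntidiagonal.mem_antidiagonal] at h1
      rcases Nat.eq_zero_or_pos j with hj | hj
      · subst hj
        simp only [hasseDeriv_zero']
      -- j = 0 case: hasseDeriv i (Φ^e) * Φ, need Φ ∣; Φ divides second factor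
        exact Dvd.dvd.mul_left (dvd_refl Φ) _
      · have hi : i < e := by
          rcases Nat.lt_or_ge i e with h | h
          · exact h
          · exfalso; have : i = e ∧ j = 1 := by omega
            exact h2 (by simp [this.1, this.2])
        exact (dvd_hasseDeriv_pow Φ e i hi).mul_right _

theorem key_pow_dvd (Φ P : Polynomial A)
    (hbez : ∃ u v : Polynomial A, ∃ c : ℤ, c ≠ 0 ∧ u * Φ + v * derivative Φ = (c : Polynomial A))
    (e : ℕ) (hder : ∀ j < e, Φ ∣ hasseDeriv j P) :
    ∃ d : ℤ, d ≠ 0 ∧ Φ ^ e ∣ (d : Polynomial A) * P := by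
  induction e with
  | zero => exact ⟨1, one_ne_zero, by simp⟩
  | succ e ih =>
    obtain ⟨d, hd, Q, hQ⟩ := ih (fun j hj => hder j (by omega))
    obtain ⟨u, v, c, hc, huv⟩ := hbez
    -- Φ ∣ hasseDeriv e ((d : A[X]) * P)
    have h3 : Φ ∣ hasseDeriv e ((d : Polynomial A) * P) := by
      rw [show ((d : Polynomial A)) = C ((d : ℤ) : A) from (Polynomial.C_eq_intCast (d : ℤ)).symm,
        ← smul_eq_C_mul, map_smul, smul_eq_C_mul]
      exact (hder e (by omega)).mul_left _
    -- L2 : Φ ∣ hasseDeriv e (Φ^e * Q) - hasseDeriv e (Φ^e) * Q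
    have h2 : Φ ∣ hasseDeriv e (Φ ^ e * Q) - hasseDeriv e (Φ ^ e) * Q := by
      rw [hasseDeriv_mul]
      have hmem : ((e, 0) : ℕ × ℕ) ∈ antidiagonal e := by
        rw [Finset.HasAntidiagonal.mem_antidiagonal]; simp
      rw [← Finset.add_sum_erase _ _ hmem]
      simp only [hasseDeriv_zero']
      rw [add_sub_cancel_left]
      apply Finset.dvd_sum
      rintro ⟨i, j⟩ hij
      have h1' := Finset.mem_of_mem_erase hij
      have h2' := Finset.ne_of_mem_erase hij
      rw [Finset.HasAntidiagonal.mem_antidiagonal] at h1'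
      have hi : i < e := by
        rcases Nat.lt_or_ge i e with h | h
        · exact h
        · exfalso; have : i = e ∧ j = 0 := by omega
          exact h2' (by simp [this.1, this.2])
      exact (dvd_hasseDeriv_pow Φ e i hi).mul_right _
    have h4 : Φ ∣ hasseDeriv e (Φ ^ e) * Q := by
      have : hasseDeriv e (Φ ^ e) * Q
          = hasseDeriv e ((d : Polynomial A) * P) - (hasseDeriv e (Φ ^ e * Q) - hasseDeriv e (Φ ^ e) * Q) := by
        rw [hQ]; ring
      rw [this]
      exact dvd_sub h3 h2
    have h5 : Φ ∣ (derivative Φ) ^ e * Q := by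
      have : (derivative Φ) ^ e * Q
          = hasseDeriv e (Φ ^ e) * Q - (hasseDeriv e (Φ ^ e) - derivative Φ ^ e) * Q := by ring
      rw [this]
      exact dvd_sub h4 ((hasseDeriv_pow_sub_deriv_pow Φ e).mul_right _)
    have h6 : Φ ∣ (c : Polynomial A) ^ e * Q := by
      have hdvd1 : Φ ∣ ((c : Polynomial A) ^ e - (v * derivative Φ) ^ e) := by
        have hsub : (c : Polynomial A) - v * derivative Φ = u * Φ := by rw [← huv]; ring
        have h0 : Φ ∣ (c : Polynomial A) - v * derivative Φ := by
          rw [hsub]; exact Dvd.intro_left u rfl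
        exact dvd_trans h0 (sub_dvd_pow_sub_pow _ _ e)
      have : (c : Polynomial A) ^ e * Q
          = ((c : Polynomial A) ^ e - (v * derivative Φ) ^ e) * Q + v ^ e * ((derivative Φ) ^ e * Q) := by
        ring
      rw [this]
      exact dvd_add (hdvd1.mul_right _) (h5.mul_left _)
    obtain ⟨T, hT⟩ := h6
    refine ⟨c ^ e * d, mul_ne_zero (pow_ne_zero _ hc) hd, T, ?_⟩
    have : ((c ^ e * d : ℤ) : Polynomial A) * P = (c : Polynomial A) ^ e * ((d : Polynomial A) * P) := by
      push_cast; ring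
    rw [this, hQ, pow_succ]
    calc (c : Polynomial A) ^ e * (Φ ^ e * Q) = Φ ^ e * ((c : Polynomial A) ^ e * Q) := by ring
      _ = Φ ^ e * (Φ * T) := by rw [hT]
      _ = Φ ^ e * Φ * T := by ring
end Hasse

section Coeff
variable {A : Type*} [CommRing A]

theorem coeff_one_sub_X_pow (k j : ℕ) :
    PowerSeries.coeff (R := A) j ((1 - PowerSeries.X) ^ k) = (-1) ^ j * (k.choose j : A) := by
  have : ((1 : PowerSeries A) - PowerSeries.X) ^ k
      = ∑ i ∈ Finset.range (k + 1), (-PowerSeries.X) ^ i * 1 ^ (k - i) * (k.choose i : PowerSeries A) := by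
    rw [sub_eq_add_neg, add_comm, add_pow]
  rw [this, map_sum]
  have hterm : ∀ i ∈ Finset.range (k + 1),
      PowerSeries.coeff (R := A) j ((-PowerSeries.X) ^ i * 1 ^ (k - i) * (k.choose i : PowerSeries A))
      = if i = j then (-1) ^ j * (k.choose j : A) else 0 := by
    intro i _
    rw [neg_pow, one_pow, mul_one]
    have : ((k.choose i : PowerSeries A)) = PowerSeries.C (R := A) ((k.choose i : A)) := by
      simp [map_natCast]
    rw [this, mul_comm ((-1 : PowerSeries A) ^ i * PowerSeries.X ^ i) _, ← mul_assoc]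
    rw [show ((-1 : PowerSeries A) ^ i) = PowerSeries.C (R := A) ((-1 : A) ^ i) by simp, ← map_mul]
    rw [PowerSeries.coeff_C_mul, PowerSeries.coeff_X_pow]
    by_cases h : j = i
    · subst h; simp [mul_comm]
    · simp [h, Ne.symm h]
  rw [Finset.sum_congr rfl hterm]
  by_cases hj : j < k + 1
  · rw [Finset.sum_ite_eq' (Finset.range (k+1)) j]
    simp [Finset.mem_range.mpr hj]
  · rw [Finset.sum_ite_eq' (Finset.range (k+1)) j]
    simp only [Finset.mem_range, hj, if_false]
    rw [Nat.choose_eq_zero_of_lt (by omega)]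
    simp

end Coeff

theorem zetaBar_pow_m (R : Type*) [CommRing R] (m : ℕ) : (zetaBar R m) ^ m = 1 := by
  have : (Ideal.Quotient.mk (Ideal.span {Polynomial.cyclotomic m R})) (X ^ m - 1) = 0 := by
    rw [Ideal.Quotient.eq_zero_iff_mem, Ideal.mem_span_singleton]
    exact cyclotomic.dvd_X_pow_sub_one m R
  have h2 : (Ideal.Quotient.mk (Ideal.span {Polynomial.cyclotomic m R})) (X ^ m)
      = (Ideal.Quotient.mk _) (1 : Polynomial R) := by
    rw [← sub_eq_zero, ← map_sub, this]
  simpa [zetaBar, map_pow] using h2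

theorem coeff_expandAt (R : Type*) [CommRing R] (m : ℕ) (P : Polynomial R) (j : ℕ) :
    PowerSeries.coeff (R := cycQuot R m) j (expandAt R m P)
      = (-1) ^ j * (zetaBar R m) ^ j *
        (Ideal.Quotient.mk (Ideal.span {Polynomial.cyclotomic m R}) ((Polynomial.hasseDeriv j P))) := by
  induction P using Polynomial.induction_on' with
  | add p q hp hq => simp only [map_add, hp, hq]; ring
  | monomial k a =>
    rw [show expandAt R m ((monomial k) a) = Polynomial.eval₂ _ _ ((monomial k) a) from rfl,
      Polynomial.eval₂_monomial, hasseDeriv_monomial]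
    simp only [RingHom.comp_apply]
    rw [mul_pow, ← map_pow, ← mul_assoc, ← map_mul, PowerSeries.coeff_C_mul, coeff_one_sub_X_pow]
    have hmk : (Ideal.Quotient.mk (Ideal.span {Polynomial.cyclotomic m R}))
        ((monomial (k - j)) ((k.choose j : R) * a))
        = (k.choose j : cycQuot R m) * (zetaBar R m) ^ (k - j) *
          (Ideal.Quotient.mk (Ideal.span {Polynomial.cyclotomic m R}) (C a)) := by
      rw [← Polynomial.C_mul_X_pow_eq_monomial]
      simp only [map_mul, map_pow, map_natCast, Polynomial.C_mul]
      rw [zetaBar]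
      ring
    rw [hmk]
    rcases Nat.lt_or_ge k j with h | h
    · rw [Nat.choose_eq_zero_of_lt h]
      simp
    · have hz : (zetaBar R m) ^ j * (zetaBar R m) ^ (k - j) = (zetaBar R m) ^ k := by
        rw [← pow_add]
        congr 1
        omega
      rw [show (-1 : cycQuot R m) ^ j * (zetaBar R m) ^ j *
          ((k.choose j : cycQuot R m) * (zetaBar R m) ^ (k - j) *
            (Ideal.Quotient.mk (Ideal.span {Polynomial.cyclotomic m R}) (C a)))
        = (-1 : cycQuot R m) ^ j * ((zetaBar R m) ^ j * (zetaBar R m) ^ (k - j)) *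
            ((k.choose j : cycQuot R m) *
            (Ideal.Quotient.mk (Ideal.span {Polynomial.cyclotomic m R}) (C a))) from by ring,
        hz]
      ring

section Prod
variable {A : Type*} [CommRing A]

theorem prod_X_pow_sub_one_eq (n : ℕ) :
    ∏ k ∈ Finset.Ioc 0 n, ((X : Polynomial A) ^ k - 1)
      = ∏ m ∈ Finset.Ioc 0 n, (cyclotomic m A) ^ (n / m) := by
  classical
  have h1 : ∀ k ∈ Finset.Ioc 0 n, ((X : Polynomial A) ^ k - 1)
      = ∏ d ∈ k.divisors, cyclotomic d A := by
    intro k hk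
    rw [Finset.mem_Ioc] at hk
    rw [prod_cyclotomic_eq_X_pow_sub_one hk.1]
  rw [Finset.prod_congr rfl h1]
  rw [Finset.prod_comm' (t' := Finset.Ioc 0 n)
    (s' := fun d => (Finset.Ioc 0 n).filter (fun k => d ∣ k)) ?_]
  · apply Finset.prod_congr rfl
    intro d _
    rw [Finset.prod_const]
    congr 1
    simpa using Nat.Ioc_filter_dvd_card_eq_div n d
  · intro k d
    simp only [Finset.mem_Ioc, Nat.mem_divisors, Finset.mem_filter]
    constructor
    · rintro ⟨⟨hk0, hkn⟩, hdk, hk⟩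
      have hd0 : 0 < d := Nat.pos_of_dvd_of_pos hdk hk0
      exact ⟨⟨⟨hk0, hkn⟩, hdk⟩, hd0, le_trans (Nat.le_of_dvd hk0 hdk) hkn⟩
    · rintro ⟨⟨⟨hk0, hkn⟩, hdk⟩, _⟩
      exact ⟨⟨hk0, hkn⟩, hdk, by omega⟩

theorem pochP_eq (R : Type*) [CommRing R] (n : ℕ) :
    pochP R n = (-1) ^ n * ∏ k ∈ Finset.Ioc 0 n, ((X : Polynomial R) ^ k - 1) := by
  rw [pochP]
  have h : ∏ k ∈ Finset.Ioc 0 n, ((X : Polynomial R) ^ k - 1)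
      = ∏ j ∈ Finset.range n, ((X : Polynomial R) ^ (j + 1) - 1) := by
    refine Finset.prod_nbij' (fun k => k - 1) (fun j => j + 1) ?_ ?_ ?_ ?_ ?_
    · intro k hk; simp only [Finset.mem_Ioc] at hk; simp only [Finset.mem_range]; omega
    · intro j hj; simp only [Finset.mem_range] at hj; simp only [Finset.mem_Ioc]; omega
    · intro k hk; simp only [Finset.mem_Ioc] at hk; show k - 1 + 1 = k; omega
    · intro j _; show j + 1 - 1 = j; omega
    · intro k hk; simp only [Finset.mem_Ioc] at hk
      show (X : Polynomial R) ^ k - 1 = X ^ (k - 1 + 1) - 1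
      congr 2
      omega
  rw [h, show ((-1 : Polynomial R)) ^ n = ∏ _j ∈ Finset.range n, (-1 : Polynomial R) from by
    rw [Finset.prod_const, Finset.card_range], ← Finset.prod_mul_distrib]
  apply Finset.prod_congr rfl
  intro j _
  ring

theorem monic_prod_X_pow_sub_one (n : ℕ) :
    (∏ k ∈ Finset.Ioc 0 n, ((X : Polynomial A) ^ k - 1)).Monic := by
  apply monic_prod_of_monic
  intro k hk
  rw [Finset.mem_Ioc] at hk
  have := Polynomial.monic_X_pow_sub_C (1 : A) (Nat.pos_iff_ne_zero.mp hk.1)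
  simpa using this
end Prod


end AuxHabiro

theorem statement18 (R : Type*) [CommRing R]
    (htf : ∀ (k : ℕ), 0 < k → ∀ a : R, k • a = 0 → a = 0)
    (x : ∀ n : ℕ, Polynomial R ⧸ pochIdeal R n)
    (hcomp : ∀ n : ℕ,
      Ideal.Quotient.factor (pochIdeal_le R n)
        (x (n + 1)) = x n)
    (hvanish : ∀ m : ℕ, 1 ≤ m → ∀ j n : ℕ, m * (j + 1) ≤ n →
      ∀ P : Polynomial R, Ideal.Quotient.mk (pochIdeal R n) P = x n →
        PowerSeries.coeff (R := cycQuot R m) j (expandAt R m P) = 0) :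
    ∀ n : ℕ, x n = 0 := by
  intro n
  obtain ⟨P, hP⟩ := Ideal.Quotient.mk_surjective (x n)
  suffices h : pochP R n ∣ P by
    rw [← hP, Ideal.Quotient.eq_zero_iff_mem]
    show P ∈ Ideal.span {pochP R n}
    exact Ideal.mem_span_singleton.mpr h
  set M : Polynomial R := ∏ k ∈ Finset.Ioc 0 n, ((Polynomial.X : Polynomial R) ^ k - 1) with hM
  have hMP : ∃ d : ℤ, d ≠ 0 ∧ M ∣ (d : Polynomial R) * P := by
    rw [hM, prod_X_pow_sub_one_eq]
    apply combine_prod (F := fun m => (Polynomial.cyclotomic m R) ^ (n / m))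
    · intro i _ j _ hij
      exact (ibez_cyclotomic_ne hij).pow _ _
    · intro m hm
      rw [Finset.mem_Ioc] at hm
      obtain ⟨u, v, c, hc, huv⟩ := ibez_cyclotomic_deriv (A := R) m hm.1
      apply key_pow_dvd _ _ ⟨u, v, c, hc, huv⟩
      intro j hj
      have hjn : m * (j + 1) ≤ n := by
        calc m * (j + 1) ≤ m * (n / m) := Nat.mul_le_mul_left m hj
          _ ≤ n := Nat.mul_div_le n m
      have hcoeff := hvanish m hm.1 j n hjn P hP
      rw [coeff_expandAt] at hcoeff
      have hmk : Ideal.Quotient.mk (Ideal.span {Polynomial.cyclotomic m R})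
          (Polynomial.hasseDeriv j P) = 0 := by
        set D := Ideal.Quotient.mk (Ideal.span {Polynomial.cyclotomic m R})
          (Polynomial.hasseDeriv j P) with hD
        have h1 : ((-1 : cycQuot R m) ^ j) * ((-1 : cycQuot R m) ^ j) = 1 := by
          rw [← mul_pow]; norm_num
        have h2 : (zetaBar R m) ^ (j * (m - 1)) * (zetaBar R m) ^ j = 1 := by
          obtain ⟨m', rfl⟩ : ∃ m', m = m' + 1 := ⟨m - 1, by omega⟩
          rw [← pow_add, show j * (m' + 1 - 1) + j = (m' + 1) * j from by
            rw [Nat.add_sub_cancel]; ring, pow_mul, zetaBar_pow_m, one_pow]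
        have key : (zetaBar R m) ^ (j * (m - 1)) *
            ((-1 : cycQuot R m) ^ j * ((-1 : cycQuot R m) ^ j * (zetaBar R m) ^ j * D)) = D := by
          calc (zetaBar R m) ^ (j * (m - 1)) *
              ((-1 : cycQuot R m) ^ j * ((-1 : cycQuot R m) ^ j * (zetaBar R m) ^ j * D))
              = (((-1 : cycQuot R m) ^ j) * ((-1 : cycQuot R m) ^ j)) *
                ((zetaBar R m) ^ (j * (m - 1)) * (zetaBar R m) ^ j) * D := by ring
            _ = D := by rw [h1, h2]; ring
        rw [← key, hcoeff, mul_zero, mul_zero]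
      exact Ideal.mem_span_singleton.mp (Ideal.Quotient.eq_zero_iff_mem.mp hmk)
  obtain ⟨d, hd, hDvd⟩ := hMP
  have hMonic : M.Monic := monic_prod_X_pow_sub_one n
  have h0 : ((d : Polynomial R) * P) %ₘ M = 0 :=
    (Polynomial.modByMonic_eq_zero_iff_dvd hMonic).mpr hDvd
  have hsm : (d : Polynomial R) * P = ((d : ℤ) : R) • P := by
    rw [Polynomial.smul_eq_C_mul, Polynomial.C_eq_intCast]
  rw [hsm, Polynomial.smul_modByMonic] at h0
  have hPmod : P %ₘ M = 0 := by
    ext i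
    have hcoeff : ((d : ℤ) : R) * (P %ₘ M).coeff i = 0 := by
      have := congrArg (fun p => Polynomial.coeff p i) h0
      simpa using this
    have hz : (d.natAbs : ℕ) • ((P %ₘ M).coeff i) = 0 := by
      have hzs : (d : ℤ) • ((P %ₘ M).coeff i) = 0 := by
        rw [zsmul_eq_mul']
        rw [mul_comm]
        exact hcoeff
      rcases Int.natAbs_eq d with h | h
      · rw [← natCast_zsmul, ← h, hzs]
      · rw [← natCast_zsmul, show ((d.natAbs : ℤ)) = -d from by omega, neg_zsmul, hzs, neg_zero]
    simpa using htf d.natAbs (Int.natAbs_pos.mpr hd) _ hz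
  have hMdvd : M ∣ P := (Polynomial.modByMonic_eq_zero_iff_dvd hMonic).mp hPmod
  have hpM : pochP R n ∣ M := by
    have hMe : M = (-1) ^ n * pochP R n := by
      rw [pochP_eq, ← mul_assoc, ← mul_pow]
      norm_num [hM]
    exact Dvd.intro_left _ hMe.symm
  exact hpM.trans hMdvd
end
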